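/- arXiv:1904.13369 — 7 statements merged into one kernel-verified Lean document; each statement's English description precedes it below -/
import Mathlib

section
/- Let H be a finite set of horizontal segments in ℝ², each crossing the vertical line L_v: x = 0, and let H_h ⊆ H. Let y : H → [0,1] be a fractional cover of H_h by H, i.e., for every i ∈ H_h, Σ_{j ∈ H, j ∩ i ≠ ∅} y(j) ≥ 1. Then there exists a subset S' ⊆ H such that every segment of H_h is stabbed by some segment of S' and |S'| ≤ Σ_{j ∈ H} y(j). (In other words, the integer program of stabbing H_h by segments of H has optimum value at most the optimum of its LP relaxation.) -/
open scoped Classical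

/-- `s` is a horizontal segment crossing the vertical line `x = 0`. -/
def IsHorizontalCrossing (s : Set (ℝ × ℝ)) : Prop :=
  ∃ a b y : ℝ, a ≤ 0 ∧ 0 ≤ b ∧ s = Set.Icc a b ×ˢ ({y} : Set ℝ)

/-- The y-level of a (nonempty) segment. -/
noncomputable def lvl (s : Set (ℝ × ℝ)) : ℝ :=
  if h : s.Nonempty then h.choose.2 else 0

lemma lvl_spec {s : Set (ℝ × ℝ)} (hs : IsHorizontalCrossing s) :
    ((0 : ℝ), lvl s) ∈ s ∧ ∀ p ∈ s, p.2 = lvl s := by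
  obtain ⟨a, b, yy, ha, hb, rfl⟩ := hs
  have hne : (Set.Icc a b ×ˢ ({yy} : Set ℝ)).Nonempty :=
    ⟨(0, yy), by simp [Set.mem_prod, ha, hb]⟩
  have hmem := hne.choose_spec
  have hl : lvl (Set.Icc a b ×ˢ ({yy} : Set ℝ)) = yy := by
    rw [lvl, dif_pos hne]
    exact hmem.2
  constructor
  · rw [hl]; exact ⟨⟨ha, hb⟩, rfl⟩
  · intro p hp; rw [hl]; exact hp.2

/-- Lemma 4 of the paper: the integer program of stabbing a subfamily `Hh` of
horizontal segments (all crossing `L_v : x = 0`) by segments of `H` has optimum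
at most the cost of any fractional cover. -/
theorem stmt2 (H Hh : Finset (Set (ℝ × ℝ)))
    (hH : ∀ h ∈ H, IsHorizontalCrossing h)
    (hHh : Hh ⊆ H)
    (y : Set (ℝ × ℝ) → ℝ)
    (hy01 : ∀ j ∈ H, y j ∈ Set.Icc (0 : ℝ) 1)
    (hcover : ∀ i ∈ Hh, 1 ≤ ∑ j ∈ H.filter (fun j => (j ∩ i).Nonempty), y j) :
    ∃ S' ⊆ H, (∀ i ∈ Hh, ∃ s ∈ S', (s ∩ i).Nonempty) ∧
      (S'.card : ℝ) ≤ ∑ j ∈ H, y j := by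
  -- segments of H intersect iff they have the same level
  have key : ∀ i ∈ H, ∀ j ∈ H, ((j ∩ i).Nonempty ↔ lvl j = lvl i) := by
    intro i hi j hj
    obtain ⟨hj0, hjall⟩ := lvl_spec (hH j hj)
    obtain ⟨hi0, hiall⟩ := lvl_spec (hH i hi)
    constructor
    · rintro ⟨p, hpj, hpi⟩
      rw [← hjall p hpj, ← hiall p hpi]
    · intro h
      exact ⟨((0 : ℝ), lvl j), hj0, by rw [h]; exact hi0⟩
  set T := Hh.image lvl with hT
  -- choice of representative in Hh for each level
  have hg : ∀ t ∈ T, ∃ i, i ∈ Hh ∧ lvl i = t := by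
    intro t ht
    obtain ⟨i, hi, hit⟩ := Finset.mem_image.1 ht
    exact ⟨i, hi, hit⟩
  classical
  set g : ℝ → Set (ℝ × ℝ) := fun t =>
    if h : ∃ i, i ∈ Hh ∧ lvl i = t then h.choose else ∅ with hgdef
  have hgmem : ∀ t ∈ T, g t ∈ Hh ∧ lvl (g t) = t := by
    intro t ht
    have h := hg t ht
    simp only [hgdef, dif_pos h]
    exact h.choose_spec
  refine ⟨T.image g, ?_, ?_, ?_⟩
  · intro s hs
    obtain ⟨t, ht, rfl⟩ := Finset.mem_image.1 hs
    exact hHh (hgmem t ht).1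
  · intro i hi
    have hti : lvl i ∈ T := Finset.mem_image_of_mem _ hi
    refine ⟨g (lvl i), Finset.mem_image_of_mem _ hti, ?_⟩
    exact (key i (hHh hi) _ (hHh (hgmem _ hti).1)).2 (hgmem _ hti).2
  · -- cardinality bound
    have h1 : ((T.image g).card : ℝ) ≤ (T.card : ℝ) := by
      exact_mod_cast Finset.card_image_le
    refine h1.trans ?_
    -- each level of T contributes at least 1
    have h2 : (T.card : ℝ) ≤ ∑ t ∈ T, ∑ j ∈ H.filter (fun j => lvl j = t), y j := by
      rw [Finset.card_eq_sum_ones, Nat.cast_sum]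
      refine Finset.sum_le_sum ?_
      intro t ht
      obtain ⟨i, hi, hit⟩ := hg t ht
      have := hcover i hi
      push_cast
      refine le_trans this (le_of_eq ?_)
      congr 1
      apply Finset.filter_congr
      intro j hj
      simp only [key i (hHh hi) j hj, hit]
    refine h2.trans ?_
    have h3 : ∑ t ∈ Hh.image lvl, ∑ j ∈ H.filter (fun j => lvl j = t), y j ≤
        ∑ t ∈ H.image lvl, ∑ j ∈ H.filter (fun j => lvl j = t), y j := by
      refine Finset.sum_le_sum_of_subset_of_nonneg
        (Finset.image_subset_image hHh) ?_
      intro t _ _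
      exact Finset.sum_nonneg fun j hj => (hy01 j (Finset.mem_filter.1 hj).1).1
    refine h3.trans (le_of_eq ?_)
    exact Finset.sum_fiberwise_of_maps_to (fun j hj => Finset.mem_image_of_mem _ hj) y
end

section
/- Let H be a finite set of horizontal segments each crossing the vertical line L_v: x = 0, let V(l) be a finite set of vertical segments each with x-coordinate strictly less than 0, and V(r) a finite set of vertical segments each with x-coordinate strictly greater than 0, with H, V(l), V(r) pairwise disjoint. Let y* : H ∪ V(l) ∪ V(r) → [0,1] be a fractional cover of H by H ∪ V(l) ∪ V(r), and define H_l = {i ∈ H : Σ_{j ∈ V(l), j ∩ i ≠ ∅} y*(j) ≥ 2/5}, H_r = {i ∈ H : Σ_{j ∈ V(r), j ∩ i ≠ ∅} y*(j) ≥ 2/5}, and H_h = {i ∈ H : Σ_{j ∈ H, j ∩ i ≠ ∅} y*(j) ≥ 1/5}. Then H = H_l ∪ H_r ∪ H_h; consequently, if S₁ hits H_l, S₂ hits H_r and S₃ hits H_h, then S₁ ∪ S₂ ∪ S₃ hits H. -/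
open scoped Classical

/-- `s` is a vertical segment with `x`-coordinate `< 0`. -/
def IsVerticalLeft (s : Set (ℝ × ℝ)) : Prop :=
  ∃ x c d : ℝ, x < 0 ∧ c ≤ d ∧ s = ({x} : Set ℝ) ×ˢ Set.Icc c d

/-- `s` is a vertical segment with `x`-coordinate `> 0`. -/
def IsVerticalRight (s : Set (ℝ × ℝ)) : Prop :=
  ∃ x c d : ℝ, 0 < x ∧ c ≤ d ∧ s = ({x} : Set ℝ) ×ˢ Set.Icc c d

/-- A family `A` of segments hits a family `D` if every member of `D` is
stabbed by some member of `A`. -/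
def Hits (A D : Finset (Set (ℝ × ℝ))) : Prop :=
  ∀ d ∈ D, ∃ a ∈ A, (a ∩ d).Nonempty

/-- Correctness of the 5-approximation: if `ystar` is a fractional cover of `H`
by `H ∪ V(l) ∪ V(r)`, then `H = H_l ∪ H_r ∪ H_h`; consequently solutions of the
three subproblems together hit all of `H`. -/
theorem stmt4 (H Vl Vr : Finset (Set (ℝ × ℝ)))
    (hH : ∀ h ∈ H, IsHorizontalCrossing h)
    (hVl : ∀ v ∈ Vl, IsVerticalLeft v)
    (hVr : ∀ v ∈ Vr, IsVerticalRight v)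
    (hd1 : Disjoint H Vl) (hd2 : Disjoint H Vr) (hd3 : Disjoint Vl Vr)
    (ystar : Set (ℝ × ℝ) → ℝ)
    (hy01 : ∀ j ∈ H ∪ Vl ∪ Vr, ystar j ∈ Set.Icc (0 : ℝ) 1)
    (hcover : ∀ i ∈ H,
      1 ≤ ∑ j ∈ (H ∪ Vl ∪ Vr).filter (fun j => (j ∩ i).Nonempty), ystar j)
    (Hl Hr Hh : Finset (Set (ℝ × ℝ)))
    (hHl : Hl = H.filter
      (fun i => (2 : ℝ) / 5 ≤ ∑ j ∈ Vl.filter (fun j => (j ∩ i).Nonempty), ystar j))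
    (hHr : Hr = H.filter
      (fun i => (2 : ℝ) / 5 ≤ ∑ j ∈ Vr.filter (fun j => (j ∩ i).Nonempty), ystar j))
    (hHh : Hh = H.filter
      (fun i => (1 : ℝ) / 5 ≤ ∑ j ∈ H.filter (fun j => (j ∩ i).Nonempty), ystar j)) :
    H = Hl ∪ Hr ∪ Hh ∧
      ∀ S₁ S₂ S₃ : Finset (Set (ℝ × ℝ)),
        Hits S₁ Hl → Hits S₂ Hr → Hits S₃ Hh → Hits (S₁ ∪ S₂ ∪ S₃) H := by
  have key : H = Hl ∪ Hr ∪ Hh := by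
    subst hHl hHr hHh
    apply Finset.Subset.antisymm
    · intro i hi
      by_contra hnot
      simp only [Finset.mem_union, Finset.mem_filter, not_or, not_and, not_le] at hnot
      have h1 := hnot.1.1 hi
      have h2 := hnot.1.2 hi
      have h3 := hnot.2 hi
      have hc := hcover i hi
      have hsplit : ((H ∪ Vl ∪ Vr).filter (fun j => (j ∩ i).Nonempty)) =
          H.filter (fun j => (j ∩ i).Nonempty) ∪ Vl.filter (fun j => (j ∩ i).Nonempty)
            ∪ Vr.filter (fun j => (j ∩ i).Nonempty) := by
        simp [Finset.filter_union]
      rw [hsplit] at hc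
      have d1 : Disjoint (H.filter (fun j => (j ∩ i).Nonempty))
          (Vl.filter (fun j => (j ∩ i).Nonempty)) :=
        Finset.disjoint_filter_filter hd1
      have d2 : Disjoint (H.filter (fun j => (j ∩ i).Nonempty) ∪
          Vl.filter (fun j => (j ∩ i).Nonempty)) (Vr.filter (fun j => (j ∩ i).Nonempty)) := by
        rw [Finset.disjoint_union_left]
        exact ⟨Finset.disjoint_filter_filter hd2, Finset.disjoint_filter_filter hd3⟩
      rw [Finset.sum_union d2, Finset.sum_union d1] at hc
      linarith
    · intro i hi
      rcases Finset.mem_union.1 hi with h | h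
      · rcases Finset.mem_union.1 h with h | h
        · exact (Finset.mem_filter.1 h).1
        · exact (Finset.mem_filter.1 h).1
      · exact (Finset.mem_filter.1 h).1
  refine ⟨key, ?_⟩
  intro S₁ S₂ S₃ h1 h2 h3 d hd
  rw [key] at hd
  rcases Finset.mem_union.1 hd with h | h
  · rcases Finset.mem_union.1 h with h | h
    · obtain ⟨a, ha, hne⟩ := h1 d h
      exact ⟨a, Finset.mem_union.2 (Or.inl (Finset.mem_union.2 (Or.inl ha))), hne⟩
    · obtain ⟨a, ha, hne⟩ := h2 d h
      exact ⟨a, Finset.mem_union.2 (Or.inl (Finset.mem_union.2 (Or.inr ha))), hne⟩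
  · obtain ⟨a, ha, hne⟩ := h3 d h
    exact ⟨a, Finset.mem_union.2 (Or.inr ha), hne⟩
end

section
/- Let H' be a finite set of horizontal segments each crossing the vertical line L_v: x = 0, and let V(l) be a finite set of vertical segments all lying on the same side of L_v (say each with x-coordinate strictly less than 0). If y : V(l) → [0,1] is a fractional cover of H' by V(l), then there exists S ⊆ V(l) such that every segment of H' is stabbed by some segment of S and |S| ≤ 2·Σ_{j ∈ V(l)} y(j). (That is, the integrality gap of the LP for stabbing the segments of H' by vertical segments on one side of L_v is at most 2.) -/
open scoped Classical

noncomputable def segA (s : Set (ℝ × ℝ)) : ℝ :=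
  if h : IsHorizontalCrossing s then h.choose else 0
noncomputable def segB (s : Set (ℝ × ℝ)) : ℝ :=
  if h : IsHorizontalCrossing s then h.choose_spec.choose else 0
noncomputable def segY (s : Set (ℝ × ℝ)) : ℝ :=
  if h : IsHorizontalCrossing s then h.choose_spec.choose_spec.choose else 0

lemma seg_spec {s : Set (ℝ × ℝ)} (h : IsHorizontalCrossing s) :
    segA s ≤ 0 ∧ 0 ≤ segB s ∧ s = Set.Icc (segA s) (segB s) ×ˢ ({segY s} : Set ℝ) := by
  unfold segA segB segY
  rw [dif_pos h, dif_pos h, dif_pos h]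
  exact h.choose_spec.choose_spec.choose_spec

noncomputable def verX (s : Set (ℝ × ℝ)) : ℝ :=
  if h : IsVerticalLeft s then h.choose else 0
noncomputable def verC (s : Set (ℝ × ℝ)) : ℝ :=
  if h : IsVerticalLeft s then h.choose_spec.choose else 0
noncomputable def verD (s : Set (ℝ × ℝ)) : ℝ :=
  if h : IsVerticalLeft s then h.choose_spec.choose_spec.choose else 0

lemma ver_spec {s : Set (ℝ × ℝ)} (h : IsVerticalLeft s) :
    verX s < 0 ∧ verC s ≤ verD s ∧ s = ({verX s} : Set ℝ) ×ˢ Set.Icc (verC s) (verD s) := by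
  unfold verX verC verD
  rw [dif_pos h, dif_pos h, dif_pos h]
  exact h.choose_spec.choose_spec.choose_spec

lemma stab_iff {v h : Set (ℝ × ℝ)} (hv : IsVerticalLeft v) (hh : IsHorizontalCrossing h) :
    (v ∩ h).Nonempty ↔ segA h ≤ verX v ∧ verC v ≤ segY h ∧ segY h ≤ verD v := by
  obtain ⟨ha0, hb0, hs⟩ := seg_spec hh
  obtain ⟨hx0, hcd, hv'⟩ := ver_spec hv
  constructor
  · rintro ⟨⟨p, q⟩, hp1, hp2⟩
    rw [hv'] at hp1; rw [hs] at hp2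
    obtain ⟨hpx, hq⟩ := hp1
    obtain ⟨hpab, hqy⟩ := hp2
    simp only [Set.mem_singleton_iff] at hpx hqy
    subst hpx; subst hqy
    exact ⟨hpab.1, hq.1, hq.2⟩
  · rintro ⟨h1, h2, h3⟩
    have hmv : ∀ p : ℝ × ℝ, p.1 = verX v → verC v ≤ p.2 → p.2 ≤ verD v → p ∈ v := by
      intro p hp1 hp2 hp3
      rw [hv']
      exact ⟨hp1, hp2, hp3⟩
    have hmh : ∀ p : ℝ × ℝ, segA h ≤ p.1 → p.1 ≤ segB h → p.2 = segY h → p ∈ h := by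
      intro p hp1 hp2 hp3
      rw [hs]
      exact ⟨⟨hp1, hp2⟩, hp3⟩
    exact ⟨(verX v, segY h), hmv _ rfl h2 h3, hmh _ h1 (le_trans hx0.le hb0) rfl⟩

lemma aux_lemma (y : Set (ℝ × ℝ) → ℝ) :
    ∀ n (H' Vl : Finset (Set (ℝ × ℝ))), H'.card ≤ n →
    (∀ h ∈ H', IsHorizontalCrossing h) →
    (∀ v ∈ Vl, IsVerticalLeft v) →
    (∀ j ∈ Vl, y j ∈ Set.Icc (0 : ℝ) 1) →
    (∀ i ∈ H', 1 ≤ ∑ j ∈ Vl.filter (fun j => (j ∩ i).Nonempty), y j) →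
    ∃ S ⊆ Vl, (∀ i ∈ H', ∃ s ∈ S, (s ∩ i).Nonempty) ∧
      (S.card : ℝ) ≤ 2 * ∑ j ∈ Vl, y j := by
  intro n
  induction n with
  | zero =>
    intro H' Vl hcard hH hVl hy01 hcover
    refine ⟨∅, Finset.empty_subset _, ?_, ?_⟩
    · intro i hi
      have : H' = ∅ := Finset.card_eq_zero.mp (Nat.le_zero.mp hcard)
      simp [this] at hi
    · simp only [Finset.card_empty, Nat.cast_zero]
      have : (0:ℝ) ≤ ∑ j ∈ Vl, y j :=
        Finset.sum_nonneg fun j hj => (hy01 j hj).1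
      linarith
  | succ n ih =>
    intro H' Vl hcard hH hVl hy01 hcover
    by_cases hemp : H' = ∅
    · refine ⟨∅, Finset.empty_subset _, ?_, ?_⟩
      · intro i hi; simp [hemp] at hi
      · simp only [Finset.card_empty, Nat.cast_zero]
        have : (0:ℝ) ≤ ∑ j ∈ Vl, y j :=
          Finset.sum_nonneg fun j hj => (hy01 j hj).1
        linarith
    · -- pick h maximizing segA
      obtain ⟨h, hhH, hmax⟩ :=
        Finset.exists_max_image H' segA (Finset.nonempty_of_ne_empty hemp)
      set N : Finset (Set (ℝ × ℝ)) := Vl.filter (fun j => (j ∩ h).Nonempty) with hN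
      have hNne : N.Nonempty := by
        by_contra hc
        rw [Finset.not_nonempty_iff_eq_empty] at hc
        have := hcover h hhH
        rw [← hN, hc] at this
        simp at this
        linarith
      obtain ⟨vt, hvtN, hvtmax⟩ := Finset.exists_max_image N verD hNne
      obtain ⟨vb, hvbN, hvbmin⟩ := Finset.exists_min_image N verC hNne
      have hvtVl : vt ∈ Vl := (Finset.mem_filter.mp hvtN).1
      have hvbVl : vb ∈ Vl := (Finset.mem_filter.mp hvbN).1
      have hvtstab : (vt ∩ h).Nonempty := (Finset.mem_filter.mp hvtN).2
      have hvbstab : (vb ∩ h).Nonempty := (Finset.mem_filter.mp hvbN).2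
      -- key claim
      have key : ∀ i ∈ H', ∀ j ∈ N, (j ∩ i).Nonempty →
          (vt ∩ i).Nonempty ∨ (vb ∩ i).Nonempty := by
        intro i hiH j hjN hji
        have hjVl : j ∈ Vl := (Finset.mem_filter.mp hjN).1
        have hjh : (j ∩ h).Nonempty := (Finset.mem_filter.mp hjN).2
        have hvj := hVl j hjVl
        have hvt := hVl vt hvtVl
        have hvb := hVl vb hvbVl
        have hhi := hH i hiH
        have hhh := hH h hhH
        rw [stab_iff hvj hhi] at hji
        rw [stab_iff hvj hhh] at hjh
        have hvth := (stab_iff hvt hhh).mp hvtstab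
        have hvbh := (stab_iff hvb hhh).mp hvbstab
        have hAi : segA i ≤ segA h := hmax i hiH
        rcases le_total (segY h) (segY i) with hy | hy
        · left
          rw [stab_iff hvt hhi]
          exact ⟨le_trans hAi hvth.1, le_trans hvth.2.1 hy,
            le_trans hji.2.2 (hvtmax j hjN)⟩
        · right
          rw [stab_iff hvb hhi]
          exact ⟨le_trans hAi hvbh.1, le_trans (hvbmin j hjN) hji.2.1,
            le_trans hy hvbh.2.2⟩
      set H'' : Finset (Set (ℝ × ℝ)) :=
        H'.filter (fun i => ¬ (vt ∩ i).Nonempty ∧ ¬ (vb ∩ i).Nonempty) with hH''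
      set Vl' : Finset (Set (ℝ × ℝ)) := Vl.filter (fun j => ¬ (j ∩ h).Nonempty) with hVl'
      have hVl'sub : Vl' ⊆ Vl := Finset.filter_subset _ _
      -- h not in H''
      have hhnot : h ∉ H'' := by
        intro hmem
        exact ((Finset.mem_filter.mp hmem).2).1 hvtstab
      have hcard'' : H''.card ≤ n := by
        have hsub : H'' ⊆ H'.erase h := by
          intro i hi
          refine Finset.mem_erase.mpr ⟨?_, (Finset.mem_filter.mp hi).1⟩
          rintro rfl; exact hhnot hi
        calc H''.card ≤ (H'.erase h).card := Finset.card_le_card hsub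
          _ = H'.card - 1 := Finset.card_erase_of_mem hhH
          _ ≤ n := by omega
      -- cover condition for H'' wrt Vl'
      have hcover'' : ∀ i ∈ H'', 1 ≤ ∑ j ∈ Vl'.filter (fun j => (j ∩ i).Nonempty), y j := by
        intro i hi
        have hiH : i ∈ H' := (Finset.mem_filter.mp hi).1
        have hinot := (Finset.mem_filter.mp hi).2
        have heq : Vl'.filter (fun j => (j ∩ i).Nonempty)
            = Vl.filter (fun j => (j ∩ i).Nonempty) := by
          rw [hVl', Finset.filter_filter]
          apply Finset.filter_congr
          intro j hjVl
          simp only [and_iff_right_iff_imp]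
          intro hji hjh
          have hjN : j ∈ N := Finset.mem_filter.mpr ⟨hjVl, hjh⟩
          rcases key i hiH j hjN hji with hc | hc
          · exact hinot.1 hc
          · exact hinot.2 hc
        rw [heq]
        exact hcover i hiH
      obtain ⟨S', hS'sub, hS'cov, hS'card⟩ := ih H'' Vl' hcard''
        (fun i hi => hH i (Finset.mem_filter.mp hi).1)
        (fun v hv => hVl v (hVl'sub hv))
        (fun j hj => hy01 j (hVl'sub hj)) hcover''
      refine ⟨insert vt (insert vb S'), ?_, ?_, ?_⟩
      · intro s hs
        rcases Finset.mem_insert.mp hs with rfl | hs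
        · exact hvtVl
        rcases Finset.mem_insert.mp hs with rfl | hs
        · exact hvbVl
        · exact hVl'sub (hS'sub hs)
      · intro i hiH
        by_cases hc : (vt ∩ i).Nonempty
        · exact ⟨vt, Finset.mem_insert_self _ _, hc⟩
        by_cases hc' : (vb ∩ i).Nonempty
        · exact ⟨vb, Finset.mem_insert.mpr (Or.inr (Finset.mem_insert_self _ _)), hc'⟩
        · have hi'' : i ∈ H'' := Finset.mem_filter.mpr ⟨hiH, hc, hc'⟩
          obtain ⟨s, hsS', hsi⟩ := hS'cov i hi''
          exact ⟨s, by simp [Finset.mem_insert.mpr (Or.inr (Finset.mem_insert.mpr (Or.inr hsS')))], hsi⟩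
      · have hc1 : (insert vt (insert vb S')).card ≤ S'.card + 2 := by
          calc (insert vt (insert vb S')).card ≤ (insert vb S').card + 1 :=
                Finset.card_insert_le _ _
            _ ≤ S'.card + 1 + 1 := by
                have := Finset.card_insert_le vb S'; omega
            _ = S'.card + 2 := by omega
        have hsplit : ∑ j ∈ Vl, y j
            = ∑ j ∈ N, y j + ∑ j ∈ Vl', y j := by
          rw [hN, hVl']
          exact (Finset.sum_filter_add_sum_filter_not Vl _ y).symm
        have hN1 : 1 ≤ ∑ j ∈ N, y j := by
          have := hcover h hhH; rw [← hN] at this; exact this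
        have : ((insert vt (insert vb S')).card : ℝ) ≤ (S'.card : ℝ) + 2 := by
          exact_mod_cast hc1
        calc ((insert vt (insert vb S')).card : ℝ) ≤ (S'.card : ℝ) + 2 := this
          _ ≤ 2 * ∑ j ∈ Vl', y j + 2 := by linarith
          _ ≤ 2 * ∑ j ∈ Vl, y j := by rw [hsplit]; linarith

/-- Lemma 3 of the paper (integrality gap 2): if `y` is a fractional cover of a
family `H'` of horizontal segments crossing `L_v : x = 0` by a family `Vl` of
vertical segments all lying strictly to the left of `L_v`, then there is an
integral cover `S ⊆ Vl` of size at most twice the fractional cost. -/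
theorem stmt5 (H' Vl : Finset (Set (ℝ × ℝ)))
    (hH : ∀ h ∈ H', IsHorizontalCrossing h)
    (hVl : ∀ v ∈ Vl, IsVerticalLeft v)
    (y : Set (ℝ × ℝ) → ℝ)
    (hy01 : ∀ j ∈ Vl, y j ∈ Set.Icc (0 : ℝ) 1)
    (hcover : ∀ i ∈ H', 1 ≤ ∑ j ∈ Vl.filter (fun j => (j ∩ i).Nonempty), y j) :
    ∃ S ⊆ Vl, (∀ i ∈ H', ∃ s ∈ S, (s ∩ i).Nonempty) ∧
      (S.card : ℝ) ≤ 2 * ∑ j ∈ Vl, y j :=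
  aux_lemma y H'.card H' Vl le_rfl hH hVl hy01 hcover
end

section
/- Let H be a finite set of horizontal segments each crossing the vertical line L_v: x = 0, let V(l) be a finite set of vertical segments each with x-coordinate strictly less than 0, and V(r) a finite set of vertical segments each with x-coordinate strictly greater than 0, with H, V(l), V(r) pairwise disjoint. Let OPT be the minimum cardinality of a subset of H ∪ V(l) ∪ V(r) that hits H (such a subset exists, e.g. H itself). Let y* : H ∪ V(l) ∪ V(r) → [0,1] be a fractional cover of H by H ∪ V(l) ∪ V(r) with cost Σ y* ≤ OPT (e.g., an optimal LP solution). Define H_l = {i ∈ H : Σ_{j ∈ V(l), j ∩ i ≠ ∅} y*(j) ≥ 2/5}, H_r = {i ∈ H : Σ_{j ∈ V(r), j ∩ i ≠ ∅} y*(j) ≥ 2/5}, H_h = {i ∈ H : Σ_{j ∈ H, j ∩ i ≠ ∅} y*(j) ≥ 1/5}. Then there exist minimum-cardinality subsets S₁ ⊆ V(l) hitting H_l, S₂ ⊆ V(r) hitting H_r, and S₃ ⊆ H hitting H_h, and any such choice satisfies |S₁ ∪ S₂ ∪ S₃| ≤ 5·OPT. -/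
open scoped Classical

/-- `S` is a minimum-cardinality subset of `E` hitting `D`. -/
def IsMinHittingSubset (E D S : Finset (Set (ℝ × ℝ))) : Prop :=
  S ⊆ E ∧ Hits S D ∧ ∀ T ⊆ E, Hits T D → S.card ≤ T.card

noncomputable def pA (s : Set (ℝ × ℝ)) : ℝ := sInf (Prod.fst '' s)
noncomputable def pB (s : Set (ℝ × ℝ)) : ℝ := sSup (Prod.fst '' s)
noncomputable def pC (s : Set (ℝ × ℝ)) : ℝ := sInf (Prod.snd '' s)
noncomputable def pD (s : Set (ℝ × ℝ)) : ℝ := sSup (Prod.snd '' s)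

lemma horiz_canon {s : Set (ℝ × ℝ)} (h : IsHorizontalCrossing s) :
    pA s ≤ 0 ∧ 0 ≤ pB s ∧ s = Set.Icc (pA s) (pB s) ×ˢ ({pC s} : Set ℝ) := by
  obtain ⟨a, b, y, ha, hb, rfl⟩ := h
  have hab : a ≤ b := ha.trans hb
  have h1 : Prod.fst '' (Set.Icc a b ×ˢ ({y} : Set ℝ)) = Set.Icc a b :=
    Set.fst_image_prod _ (Set.singleton_nonempty y)
  have h2 : Prod.snd '' (Set.Icc a b ×ˢ ({y} : Set ℝ)) = {y} :=
    Set.snd_image_prod (Set.nonempty_Icc.mpr hab) _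
  have e1 : pA (Set.Icc a b ×ˢ ({y} : Set ℝ)) = a := by rw [pA, h1, csInf_Icc hab]
  have e2 : pB (Set.Icc a b ×ˢ ({y} : Set ℝ)) = b := by rw [pB, h1, csSup_Icc hab]
  have e3 : pC (Set.Icc a b ×ˢ ({y} : Set ℝ)) = y := by rw [pC, h2, csInf_singleton]
  rw [e1, e2, e3]
  exact ⟨ha, hb, rfl⟩

lemma vert_canon {s : Set (ℝ × ℝ)} {x c d : ℝ} (hcd : c ≤ d)
    (hs : s = ({x} : Set ℝ) ×ˢ Set.Icc c d) :
    pA s = x ∧ pC s ≤ pD s ∧ s = ({pA s} : Set ℝ) ×ˢ Set.Icc (pC s) (pD s) := by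
  subst hs
  have h1 : Prod.fst '' (({x} : Set ℝ) ×ˢ Set.Icc c d) = {x} :=
    Set.fst_image_prod _ (Set.nonempty_Icc.mpr hcd)
  have h2 : Prod.snd '' (({x} : Set ℝ) ×ˢ Set.Icc c d) = Set.Icc c d :=
    Set.snd_image_prod (Set.singleton_nonempty x) _
  have e1 : pA (({x} : Set ℝ) ×ˢ Set.Icc c d) = x := by rw [pA, h1, csInf_singleton]
  have e3 : pC (({x} : Set ℝ) ×ˢ Set.Icc c d) = c := by rw [pC, h2, csInf_Icc hcd]
  have e4 : pD (({x} : Set ℝ) ×ˢ Set.Icc c d) = d := by rw [pD, h2, csSup_Icc hcd]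
  rw [e1, e3, e4]
  exact ⟨rfl, hcd, rfl⟩

lemma stab_vh {x c d a b y : ℝ} :
    ((({x} : Set ℝ) ×ˢ Set.Icc c d) ∩ (Set.Icc a b ×ˢ ({y} : Set ℝ))).Nonempty ↔
      (a ≤ x ∧ x ≤ b ∧ c ≤ y ∧ y ≤ d) := by
  constructor
  · rintro ⟨⟨px, py⟩, ⟨⟨hx1, hy1⟩, ⟨hx2, hy2⟩⟩⟩
    simp only [Set.mem_singleton_iff] at hx1 hy2
    subst hx1; subst hy2
    exact ⟨hx2.1, hx2.2, hy1.1, hy1.2⟩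
  · rintro ⟨h1, h2, h3, h4⟩
    exact ⟨(x, y), ⟨rfl, h3, h4⟩, ⟨h1, h2⟩, rfl⟩

lemma stab_hh {a b y a' b' y' : ℝ} (h1 : a ≤ 0) (h2 : 0 ≤ b) (h3 : a' ≤ 0) (h4 : 0 ≤ b') :
    ((Set.Icc a' b' ×ˢ ({y'} : Set ℝ)) ∩ (Set.Icc a b ×ˢ ({y} : Set ℝ))).Nonempty ↔ y' = y := by
  constructor
  · rintro ⟨⟨px, py⟩, ⟨⟨hx1, hy1⟩, ⟨hx2, hy2⟩⟩⟩
    simp only [Set.mem_singleton_iff] at hy1 hy2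
    rw [← hy1, ← hy2]
  · rintro rfl
    exact ⟨(0, y'), ⟨⟨h3, h4⟩, rfl⟩, ⟨h1, h2⟩, rfl⟩

lemma cover_lemma (Stab : Set (ℝ × ℝ) → Set (ℝ × ℝ) → Prop)
    (k : ℕ) (t : ℝ) (ht : 0 < t) :
    ∀ (n : ℕ) (E D : Finset (Set (ℝ × ℝ))) (z : Set (ℝ × ℝ) → ℝ),
      E.card ≤ n →
      (∀ j ∈ E, 0 ≤ z j) →
      (∀ i ∈ D, t ≤ ∑ j ∈ E.filter (fun j => Stab j i), z j) →
      (∀ D' ⊆ D, D'.Nonempty → ∃ i ∈ D',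
        ∀ G : Finset (Set (ℝ × ℝ)), G ⊆ E → (∀ j ∈ G, Stab j i) → G.Nonempty →
          ∃ F ⊆ G, F.card ≤ k ∧
            ∀ i' ∈ D', (∃ j ∈ G, Stab j i') → ∃ f ∈ F, Stab f i') →
      ∃ T ⊆ E, (∀ i ∈ D, ∃ f ∈ T, Stab f i) ∧ (T.card : ℝ) * t ≤ k * ∑ j ∈ E, z j := by
  intro n
  induction n with
  | zero =>
    intro E D z hcard hz hc hsel
    have hE : E = ∅ := Finset.card_eq_zero.mp (Nat.le_zero.mp hcard)
    subst hE
    rcases D.eq_empty_or_nonempty with rfl | ⟨i, hi⟩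
    · exact ⟨∅, Finset.Subset.rfl, by simp, by simp⟩
    · have := hc i hi
      simp at this
      linarith
  | succ m ih =>
    intro E D z hcard hz hc hsel
    rcases D.eq_empty_or_nonempty with rfl | hD
    · refine ⟨∅, Finset.empty_subset _, by simp, ?_⟩
      simp only [Finset.card_empty, Nat.cast_zero, zero_mul]
      exact mul_nonneg (Nat.cast_nonneg k) (Finset.sum_nonneg hz)
    obtain ⟨i, hiD, hi⟩ := hsel D Finset.Subset.rfl hD
    set G := E.filter (fun j => Stab j i) with hG
    have hGsum : t ≤ ∑ j ∈ G, z j := hc i hiD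
    have hGne : G.Nonempty := by
      by_contra hne
      rw [Finset.not_nonempty_iff_eq_empty] at hne
      rw [hne, Finset.sum_empty] at hGsum
      linarith
    obtain ⟨F, hFG, hFk, hFcov⟩ := hi G (Finset.filter_subset _ _)
      (fun j hj => (Finset.mem_filter.mp hj).2) hGne
    set E₂ := E.filter (fun j => ¬ Stab j i) with hE2
    have hE2sub : E₂ ⊆ E := Finset.filter_subset _ _
    have hE2card : E₂.card ≤ m := by
      obtain ⟨j0, hj0⟩ := hGne
      have hj0E : j0 ∈ E := (Finset.mem_filter.mp hj0).1
      have hj0nE2 : j0 ∉ E₂ := by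
        simp only [hE2, Finset.mem_filter, not_and, not_not]
        intro _
        exact (Finset.mem_filter.mp hj0).2
      have : E₂.card < E.card := Finset.card_lt_card ⟨hE2sub, fun hs => hj0nE2 (hs hj0E)⟩
      omega
    set D₂ := D.filter (fun i' => ¬ ∃ f ∈ F, Stab f i') with hD2
    have hD2sub : D₂ ⊆ D := Finset.filter_subset _ _
    have hc₂ : ∀ i' ∈ D₂, t ≤ ∑ j ∈ E₂.filter (fun j => Stab j i'), z j := by
      intro i' hi'
      have hnot : ¬ ∃ f ∈ F, Stab f i' := (Finset.mem_filter.mp hi').2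
      have heq : E₂.filter (fun j => Stab j i') = E.filter (fun j => Stab j i') := by
        ext j
        simp only [hE2, Finset.mem_filter, and_assoc]
        constructor
        · rintro ⟨hjE, _, hs⟩; exact ⟨hjE, hs⟩
        · rintro ⟨hjE, hs⟩
          refine ⟨hjE, fun hsi => ?_, hs⟩
          exact hnot (hFcov i' (hD2sub hi') ⟨j, Finset.mem_filter.mpr ⟨hjE, hsi⟩, hs⟩)
      rw [heq]
      exact hc i' (hD2sub hi')
    have hsel₂ : ∀ D' ⊆ D₂, D'.Nonempty → ∃ i ∈ D',
        ∀ G : Finset (Set (ℝ × ℝ)), G ⊆ E₂ → (∀ j ∈ G, Stab j i) → G.Nonempty →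
          ∃ F ⊆ G, F.card ≤ k ∧
            ∀ i' ∈ D', (∃ j ∈ G, Stab j i') → ∃ f ∈ F, Stab f i' := by
      intro D' hD' hne
      obtain ⟨i0, hi0, hp⟩ := hsel D' (hD'.trans hD2sub) hne
      exact ⟨i0, hi0, fun G' hG' => hp G' (hG'.trans hE2sub)⟩
    obtain ⟨T₂, hT₂E, hT₂hits, hT₂card⟩ := ih E₂ D₂ z hE2card
      (fun j hj => hz j (hE2sub hj)) hc₂ hsel₂
    refine ⟨F ∪ T₂, ?_, ?_, ?_⟩
    · exact Finset.union_subset (hFG.trans (Finset.filter_subset _ _)) (hT₂E.trans hE2sub)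
    · intro i' hi'
      by_cases hx : ∃ f ∈ F, Stab f i'
      · obtain ⟨f, hf, hs⟩ := hx
        exact ⟨f, Finset.mem_union_left _ hf, hs⟩
      · obtain ⟨f, hf, hs⟩ := hT₂hits i' (Finset.mem_filter.mpr ⟨hi', hx⟩)
        exact ⟨f, Finset.mem_union_right _ hf, hs⟩
    · have hsplit : ∑ j ∈ G, z j + ∑ j ∈ E₂, z j = ∑ j ∈ E, z j :=
        Finset.sum_filter_add_sum_filter_not E _ z
      have hcard1 : ((F ∪ T₂).card : ℝ) ≤ (F.card : ℝ) + (T₂.card : ℝ) := by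
        exact_mod_cast Finset.card_union_le F T₂
      have hF2 : (F.card : ℝ) ≤ (k : ℝ) := by exact_mod_cast hFk
      have h1 : ((F ∪ T₂).card : ℝ) * t ≤ (F.card : ℝ) * t + (T₂.card : ℝ) * t := by
        nlinarith
      have h2 : (F.card : ℝ) * t ≤ (k : ℝ) * ∑ j ∈ G, z j := by
        nlinarith [mul_le_mul_of_nonneg_left hGsum (Nat.cast_nonneg k : (0:ℝ) ≤ k)]
      have h3 : (k : ℝ) * ∑ j ∈ G, z j + (k : ℝ) * ∑ j ∈ E₂, z j = (k : ℝ) * ∑ j ∈ E, z j := by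
        rw [← hsplit]; ring
      linarith

lemma exists_min_hitting (E D : Finset (Set (ℝ × ℝ))) (h : Hits E D) :
    ∃ S, IsMinHittingSubset E D S := by
  have hne : {k | ∃ T ⊆ E, Hits T D ∧ T.card = k}.Nonempty :=
    ⟨E.card, E, Finset.Subset.rfl, h, rfl⟩
  obtain ⟨S, hSE, hSh, hScard⟩ := Nat.sInf_mem hne
  exact ⟨S, hSE, hSh, fun T hT hTh => hScard ▸ Nat.sInf_le ⟨T, hT, hTh, rfl⟩⟩

/-- Selection lemma for vertical segments on one side. `sign = true` means left. -/
lemma hsel_left (H Vl D : Finset (Set (ℝ × ℝ))) (hH : ∀ h ∈ H, IsHorizontalCrossing h)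
    (hVl : ∀ v ∈ Vl, IsVerticalLeft v) (hD : D ⊆ H) :
    ∀ D' ⊆ D, D'.Nonempty → ∃ i ∈ D',
      ∀ G : Finset (Set (ℝ × ℝ)), G ⊆ Vl → (∀ j ∈ G, (j ∩ i).Nonempty) → G.Nonempty →
        ∃ F ⊆ G, F.card ≤ 2 ∧
          ∀ i' ∈ D', (∃ j ∈ G, (j ∩ i').Nonempty) → ∃ f ∈ F, (f ∩ i').Nonempty := by
  intro D' hD' hne
  obtain ⟨i, hiD, hmax⟩ := D'.exists_max_image pA hne
  have hiH : IsHorizontalCrossing i := hH i (hD (hD' hiD))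
  obtain ⟨hiA, hiB, hiEq⟩ := horiz_canon hiH
  refine ⟨i, hiD, ?_⟩
  intro G hGV hGs hGne
  have vcanon : ∀ j ∈ G, pA j < 0 ∧ pC j ≤ pD j ∧
      j = ({pA j} : Set ℝ) ×ˢ Set.Icc (pC j) (pD j) := by
    intro j hj
    obtain ⟨x, c, d, hx, hcd, hjeq⟩ := hVl j (hGV hj)
    obtain ⟨hpa, h2, h3⟩ := vert_canon hcd hjeq
    exact ⟨hpa ▸ hx, h2, h3⟩
  have stabiff : ∀ j ∈ G, ∀ s, IsHorizontalCrossing s →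
      ((j ∩ s).Nonempty ↔ (pA s ≤ pA j ∧ pA j ≤ pB s ∧ pC j ≤ pC s ∧ pC s ≤ pD j)) := by
    intro j hj s hs
    obtain ⟨-, -, hjeq⟩ := vcanon j hj
    obtain ⟨-, -, hseq⟩ := horiz_canon hs
    have key := stab_vh (x := pA j) (c := pC j) (d := pD j) (a := pA s) (b := pB s) (y := pC s)
    rw [← hjeq, ← hseq] at key
    exact key
  obtain ⟨jt, hjtG, hjtmax⟩ := G.exists_max_image pD hGne
  obtain ⟨jb, hjbG, hjbmin⟩ := G.exists_min_image pC hGne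
  refine ⟨{jt, jb}, ?_, ?_, ?_⟩
  · intro f hf
    rcases Finset.mem_insert.mp hf with rfl | hf
    · exact hjtG
    · rw [Finset.mem_singleton.mp hf]; exact hjbG
  · exact (Finset.card_insert_le _ _).trans (by simp)
  · rintro i' hi'D ⟨j, hjG, hstab'⟩
    have hi'H : IsHorizontalCrossing i' := hH i' (hD (hD' hi'D))
    obtain ⟨hi'A, hi'B, -⟩ := horiz_canon hi'H
    rw [stabiff j hjG i' hi'H] at hstab'
    obtain ⟨h1, h2, h3, h4⟩ := hstab'
    have hAi : pA i' ≤ pA i := hmax i' hi'D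
    by_cases hy : pC i ≤ pC i'
    · obtain ⟨q1, q2, q3, q4⟩ := (stabiff jt hjtG i hiH).mp (hGs jt hjtG)
      exact ⟨jt, Finset.mem_insert_self _ _, (stabiff jt hjtG i' hi'H).mpr
        ⟨hAi.trans q1, ((vcanon jt hjtG).1.le).trans hi'B, q3.trans hy,
          h4.trans (hjtmax j hjG)⟩⟩
    · push_neg at hy
      obtain ⟨q1, q2, q3, q4⟩ := (stabiff jb hjbG i hiH).mp (hGs jb hjbG)
      exact ⟨jb, Finset.mem_insert.mpr (Or.inr (Finset.mem_singleton_self _)),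
        (stabiff jb hjbG i' hi'H).mpr
        ⟨hAi.trans q1, ((vcanon jb hjbG).1.le).trans hi'B, (hjbmin j hjG).trans h3,
          hy.le.trans q4⟩⟩

lemma hsel_right (H Vr D : Finset (Set (ℝ × ℝ))) (hH : ∀ h ∈ H, IsHorizontalCrossing h)
    (hVr : ∀ v ∈ Vr, IsVerticalRight v) (hD : D ⊆ H) :
    ∀ D' ⊆ D, D'.Nonempty → ∃ i ∈ D',
      ∀ G : Finset (Set (ℝ × ℝ)), G ⊆ Vr → (∀ j ∈ G, (j ∩ i).Nonempty) → G.Nonempty →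
        ∃ F ⊆ G, F.card ≤ 2 ∧
          ∀ i' ∈ D', (∃ j ∈ G, (j ∩ i').Nonempty) → ∃ f ∈ F, (f ∩ i').Nonempty := by
  intro D' hD' hne
  obtain ⟨i, hiD, hmin⟩ := D'.exists_min_image pB hne
  have hiH : IsHorizontalCrossing i := hH i (hD (hD' hiD))
  obtain ⟨hiA, hiB, hiEq⟩ := horiz_canon hiH
  refine ⟨i, hiD, ?_⟩
  intro G hGV hGs hGne
  have vcanon : ∀ j ∈ G, 0 < pA j ∧ pC j ≤ pD j ∧
      j = ({pA j} : Set ℝ) ×ˢ Set.Icc (pC j) (pD j) := by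
    intro j hj
    obtain ⟨x, c, d, hx, hcd, hjeq⟩ := hVr j (hGV hj)
    obtain ⟨hpa, h2, h3⟩ := vert_canon hcd hjeq
    exact ⟨hpa ▸ hx, h2, h3⟩
  have stabiff : ∀ j ∈ G, ∀ s, IsHorizontalCrossing s →
      ((j ∩ s).Nonempty ↔ (pA s ≤ pA j ∧ pA j ≤ pB s ∧ pC j ≤ pC s ∧ pC s ≤ pD j)) := by
    intro j hj s hs
    obtain ⟨-, -, hjeq⟩ := vcanon j hj
    obtain ⟨-, -, hseq⟩ := horiz_canon hs
    have key := stab_vh (x := pA j) (c := pC j) (d := pD j) (a := pA s) (b := pB s) (y := pC s)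
    rw [← hjeq, ← hseq] at key
    exact key
  obtain ⟨jt, hjtG, hjtmax⟩ := G.exists_max_image pD hGne
  obtain ⟨jb, hjbG, hjbmin⟩ := G.exists_min_image pC hGne
  refine ⟨{jt, jb}, ?_, ?_, ?_⟩
  · intro f hf
    rcases Finset.mem_insert.mp hf with rfl | hf
    · exact hjtG
    · rw [Finset.mem_singleton.mp hf]; exact hjbG
  · exact (Finset.card_insert_le _ _).trans (by simp)
  · rintro i' hi'D ⟨j, hjG, hstab'⟩
    have hi'H : IsHorizontalCrossing i' := hH i' (hD (hD' hi'D))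
    obtain ⟨hi'A, hi'B, -⟩ := horiz_canon hi'H
    rw [stabiff j hjG i' hi'H] at hstab'
    obtain ⟨h1, h2, h3, h4⟩ := hstab'
    have hBi : pB i ≤ pB i' := hmin i' hi'D
    by_cases hy : pC i ≤ pC i'
    · obtain ⟨q1, q2, q3, q4⟩ := (stabiff jt hjtG i hiH).mp (hGs jt hjtG)
      exact ⟨jt, Finset.mem_insert_self _ _, (stabiff jt hjtG i' hi'H).mpr
        ⟨hi'A.trans (vcanon jt hjtG).1.le, q2.trans hBi, q3.trans hy,
          h4.trans (hjtmax j hjG)⟩⟩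
    · push_neg at hy
      obtain ⟨q1, q2, q3, q4⟩ := (stabiff jb hjbG i hiH).mp (hGs jb hjbG)
      exact ⟨jb, Finset.mem_insert.mpr (Or.inr (Finset.mem_singleton_self _)),
        (stabiff jb hjbG i' hi'H).mpr
        ⟨hi'A.trans (vcanon jb hjbG).1.le, q2.trans hBi, (hjbmin j hjG).trans h3,
          hy.le.trans q4⟩⟩

lemma hsel_horiz (H D : Finset (Set (ℝ × ℝ))) (hH : ∀ h ∈ H, IsHorizontalCrossing h)
    (hD : D ⊆ H) :
    ∀ D' ⊆ D, D'.Nonempty → ∃ i ∈ D',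
      ∀ G : Finset (Set (ℝ × ℝ)), G ⊆ H → (∀ j ∈ G, (j ∩ i).Nonempty) → G.Nonempty →
        ∃ F ⊆ G, F.card ≤ 1 ∧
          ∀ i' ∈ D', (∃ j ∈ G, (j ∩ i').Nonempty) → ∃ f ∈ F, (f ∩ i').Nonempty := by
  intro D' hD' hne
  obtain ⟨i, hiD⟩ := hne
  have hiH : IsHorizontalCrossing i := hH i (hD (hD' hiD))
  refine ⟨i, hiD, ?_⟩
  intro G hGH hGs hGne
  have stabiff : ∀ j, IsHorizontalCrossing j → ∀ s, IsHorizontalCrossing s →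
      ((j ∩ s).Nonempty ↔ pC j = pC s) := by
    intro j hj s hs
    obtain ⟨hj1, hj2, hjeq⟩ := horiz_canon hj
    obtain ⟨hs1, hs2, hseq⟩ := horiz_canon hs
    have key := stab_hh (a := pA s) (b := pB s) (y := pC s) (a' := pA j) (b' := pB j)
      (y' := pC j) hs1 hs2 hj1 hj2
    rw [← hjeq, ← hseq] at key
    exact key
  obtain ⟨j0, hj0G⟩ := hGne
  have hj0H : IsHorizontalCrossing j0 := hH j0 (hGH hj0G)
  refine ⟨{j0}, Finset.singleton_subset_iff.mpr hj0G, by simp, ?_⟩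
  rintro i' hi'D ⟨j, hjG, hstab'⟩
  have hi'H : IsHorizontalCrossing i' := hH i' (hD (hD' hi'D))
  have hjH : IsHorizontalCrossing j := hH j (hGH hjG)
  have e1 : pC j = pC i' := (stabiff j hjH i' hi'H).mp hstab'
  have e2 : pC j = pC i := (stabiff j hjH i hiH).mp (hGs j hjG)
  have e3 : pC j0 = pC i := (stabiff j0 hj0H i hiH).mp (hGs j0 hj0G)
  exact ⟨j0, Finset.mem_singleton_self _, (stabiff j0 hj0H i' hi'H).mpr (by rw [e3, ← e2, e1])⟩

/-- Lemma 5 of the paper: the LP-based algorithm's solution `S₁ ∪ S₂ ∪ S₃` has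
size at most `5 · OPT`. -/
theorem stmt6 (H Vl Vr : Finset (Set (ℝ × ℝ)))
    (hH : ∀ h ∈ H, IsHorizontalCrossing h)
    (hVl : ∀ v ∈ Vl, IsVerticalLeft v)
    (hVr : ∀ v ∈ Vr, IsVerticalRight v)
    (hd1 : Disjoint H Vl) (hd2 : Disjoint H Vr) (hd3 : Disjoint Vl Vr)
    (OPT : ℕ)
    (hOPT : OPT = sInf {k | ∃ T ⊆ H ∪ Vl ∪ Vr, Hits T H ∧ T.card = k})
    (ystar : Set (ℝ × ℝ) → ℝ)
    (hy01 : ∀ j ∈ H ∪ Vl ∪ Vr, ystar j ∈ Set.Icc (0 : ℝ) 1)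
    (hcover : ∀ i ∈ H,
      1 ≤ ∑ j ∈ (H ∪ Vl ∪ Vr).filter (fun j => (j ∩ i).Nonempty), ystar j)
    (hcost : ∑ j ∈ H ∪ Vl ∪ Vr, ystar j ≤ (OPT : ℝ))
    (Hl Hr Hh : Finset (Set (ℝ × ℝ)))
    (hHl : Hl = H.filter
      (fun i => (2 : ℝ) / 5 ≤ ∑ j ∈ Vl.filter (fun j => (j ∩ i).Nonempty), ystar j))
    (hHr : Hr = H.filter
      (fun i => (2 : ℝ) / 5 ≤ ∑ j ∈ Vr.filter (fun j => (j ∩ i).Nonempty), ystar j))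
    (hHh : Hh = H.filter
      (fun i => (1 : ℝ) / 5 ≤ ∑ j ∈ H.filter (fun j => (j ∩ i).Nonempty), ystar j)) :
    (∃ S₁, IsMinHittingSubset Vl Hl S₁) ∧
    (∃ S₂, IsMinHittingSubset Vr Hr S₂) ∧
    (∃ S₃, IsMinHittingSubset H Hh S₃) ∧
    ∀ S₁ S₂ S₃ : Finset (Set (ℝ × ℝ)),
      IsMinHittingSubset Vl Hl S₁ → IsMinHittingSubset Vr Hr S₂ →
      IsMinHittingSubset H Hh S₃ →
      ((S₁ ∪ S₂ ∪ S₃).card : ℝ) ≤ 5 * (OPT : ℝ) := by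
  have hHlH : Hl ⊆ H := by rw [hHl]; exact Finset.filter_subset _ _
  have hHrH : Hr ⊆ H := by rw [hHr]; exact Finset.filter_subset _ _
  have hHhH : Hh ⊆ H := by rw [hHh]; exact Finset.filter_subset _ _
  -- lower bounds from the filter conditions
  have hcovl : ∀ i ∈ Hl, (2:ℝ)/5 ≤ ∑ j ∈ Vl.filter (fun j => (j ∩ i).Nonempty), ystar j := by
    intro i hi; rw [hHl] at hi; exact (Finset.mem_filter.mp hi).2
  have hcovr : ∀ i ∈ Hr, (2:ℝ)/5 ≤ ∑ j ∈ Vr.filter (fun j => (j ∩ i).Nonempty), ystar j := by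
    intro i hi; rw [hHr] at hi; exact (Finset.mem_filter.mp hi).2
  have hcovh : ∀ i ∈ Hh, (1:ℝ)/5 ≤ ∑ j ∈ H.filter (fun j => (j ∩ i).Nonempty), ystar j := by
    intro i hi; rw [hHh] at hi; exact (Finset.mem_filter.mp hi).2
  -- nonnegativity on each part
  have hzH : ∀ j ∈ H, 0 ≤ ystar j := fun j hj =>
    (hy01 j (Finset.mem_union_left _ (Finset.mem_union_left _ hj))).1
  have hzVl : ∀ j ∈ Vl, 0 ≤ ystar j := fun j hj =>
    (hy01 j (Finset.mem_union_left _ (Finset.mem_union_right _ hj))).1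
  have hzVr : ∀ j ∈ Vr, 0 ≤ ystar j := fun j hj =>
    (hy01 j (Finset.mem_union_right _ hj)).1
  -- full families hit the respective demand sets
  have hitsgen : ∀ (E D : Finset (Set (ℝ × ℝ))) (t : ℝ), 0 < t →
      (∀ i ∈ D, t ≤ ∑ j ∈ E.filter (fun j => (j ∩ i).Nonempty), ystar j) → Hits E D := by
    intro E D t ht hcov i hi
    have h := hcov i hi
    have hne : (E.filter (fun j => (j ∩ i).Nonempty)).Nonempty := by
      by_contra hn
      rw [Finset.not_nonempty_iff_eq_empty] at hn
      rw [hn, Finset.sum_empty] at h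
      linarith
    obtain ⟨j, hj⟩ := hne
    exact ⟨j, (Finset.mem_filter.mp hj).1, (Finset.mem_filter.mp hj).2⟩
  have hitVl : Hits Vl Hl := hitsgen Vl Hl (2/5) (by norm_num) hcovl
  have hitVr : Hits Vr Hr := hitsgen Vr Hr (2/5) (by norm_num) hcovr
  have hitH : Hits H Hh := hitsgen H Hh (1/5) (by norm_num) hcovh
  refine ⟨exists_min_hitting Vl Hl hitVl, exists_min_hitting Vr Hr hitVr,
    exists_min_hitting H Hh hitH, ?_⟩
  intro S₁ S₂ S₃ h₁ h₂ h₃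
  -- small hitting sets from the fractional cover
  obtain ⟨T₁, hT₁E, hT₁hits, hT₁c⟩ := cover_lemma (fun j i => (j ∩ i).Nonempty) 2 (2/5)
    (by norm_num) Vl.card Vl Hl ystar le_rfl hzVl hcovl (hsel_left H Vl Hl hH hVl hHlH)
  obtain ⟨T₂, hT₂E, hT₂hits, hT₂c⟩ := cover_lemma (fun j i => (j ∩ i).Nonempty) 2 (2/5)
    (by norm_num) Vr.card Vr Hr ystar le_rfl hzVr hcovr (hsel_right H Vr Hr hH hVr hHrH)
  obtain ⟨T₃, hT₃E, hT₃hits, hT₃c⟩ := cover_lemma (fun j i => (j ∩ i).Nonempty) 1 (1/5)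
    (by norm_num) H.card H Hh ystar le_rfl hzH hcovh (hsel_horiz H Hh hH hHhH)
  have b₁ : (S₁.card : ℝ) ≤ (T₁.card : ℝ) := by exact_mod_cast h₁.2.2 T₁ hT₁E hT₁hits
  have b₂ : (S₂.card : ℝ) ≤ (T₂.card : ℝ) := by exact_mod_cast h₂.2.2 T₂ hT₂E hT₂hits
  have b₃ : (S₃.card : ℝ) ≤ (T₃.card : ℝ) := by exact_mod_cast h₃.2.2 T₃ hT₃E hT₃hits
  have hsum : ∑ j ∈ H ∪ Vl ∪ Vr, ystar j
      = ∑ j ∈ H, ystar j + ∑ j ∈ Vl, ystar j + ∑ j ∈ Vr, ystar j := by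
    rw [Finset.sum_union (Finset.disjoint_union_left.mpr ⟨hd2, hd3⟩), Finset.sum_union hd1]
  have hcardu : ((S₁ ∪ S₂ ∪ S₃).card : ℝ) ≤ (S₁.card : ℝ) + (S₂.card : ℝ) + (S₃.card : ℝ) := by
    have := (Finset.card_union_le (S₁ ∪ S₂) S₃).trans
      (Nat.add_le_add_right (Finset.card_union_le S₁ S₂) _)
    exact_mod_cast this
  have hT₁c' : (T₁.card : ℝ) * (2/5) ≤ 2 * ∑ j ∈ Vl, ystar j := by exact_mod_cast hT₁c
  have hT₂c' : (T₂.card : ℝ) * (2/5) ≤ 2 * ∑ j ∈ Vr, ystar j := by exact_mod_cast hT₂c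
  have hT₃c' : (T₃.card : ℝ) * (1/5) ≤ 1 * ∑ j ∈ H, ystar j := by exact_mod_cast hT₃c
  linarith
end

section
/- Let (X, C⁺, C⁻) be a monotone 3SAT instance with |X| = n, and let G with the relation 'stabs' be the associated abstract stabbing instance described in the context. Then the instance has a satisfying assignment if and only if there exists a subset S ⊆ G with |S| ≤ n such that every element of G is stabbed by some element of S. -/
/-- The three horizontal segments associated with a variable:
left (`l`), right (`r`), and middle (`m`, the segment `s(v)`). -/
inductive VPart : Type
  | l | r | m
  deriving DecidableEq

/-- The abstract stabbing relation of the reduction from Planar Monotone 3SAT: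
the ground set is `({l,r,m} × X) ⊔ C⁺ ⊔ C⁻`; segments of the same variable
pairwise intersect; `(l, v)` stabs a positive clause `c` iff `v ∈ c`;
`(r, v)` stabs a negative clause `c` iff `v ∈ c`; every element stabs itself;
no other pairs are related. -/
def Stabs {ν P N : Type*} (cp : P → Finset ν) (cn : N → Finset ν) :
    (VPart × ν) ⊕ P ⊕ N → (VPart × ν) ⊕ P ⊕ N → Prop
  | .inl (_, v), .inl (_, v') => v = v'
  | .inl (t, v), .inr (.inl c) => t = VPart.l ∧ v ∈ cp c
  | .inr (.inl c), .inl (t, v) => t = VPart.l ∧ v ∈ cp c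
  | .inl (t, v), .inr (.inr c) => t = VPart.r ∧ v ∈ cn c
  | .inr (.inr c), .inl (t, v) => t = VPart.r ∧ v ∈ cn c
  | .inr (.inl c), .inr (.inl c') => c = c'
  | .inr (.inr c), .inr (.inr c') => c = c'
  | _, _ => False

/-- Lemma 1 of the paper: a monotone 3SAT instance is satisfiable iff the
associated abstract stabbing instance has a feasible solution of size at
most `n`, the number of variables. -/
theorem stmt7 {ν P N : Type*} [Fintype ν] [Fintype P] [Fintype N]
    (cp : P → Finset ν) (cn : N → Finset ν)
    (hcp : ∀ c, (cp c).Nonempty ∧ (cp c).card ≤ 3)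
    (hcn : ∀ c, (cn c).Nonempty ∧ (cn c).card ≤ 3)
    (n : ℕ) (hn : n = Fintype.card ν) :
    (∃ f : ν → Bool,
        (∀ c : P, ∃ v ∈ cp c, f v = true) ∧ (∀ c : N, ∃ v ∈ cn c, f v = false)) ↔
      (∃ S : Finset ((VPart × ν) ⊕ P ⊕ N), S.card ≤ n ∧
        ∀ g, ∃ s ∈ S, Stabs cp cn s g) := by
  classical
  constructor
  · rintro ⟨f, hp, hnn⟩
    refine ⟨Finset.univ.image (fun v => Sum.inl (if f v then VPart.l else VPart.r, v)), ?_, ?_⟩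
    · calc (Finset.univ.image (fun v => (Sum.inl (if f v then VPart.l else VPart.r, v) : (VPart × ν) ⊕ P ⊕ N))).card
          ≤ (Finset.univ : Finset ν).card := Finset.card_image_le
        _ = n := by simp [hn]
    · rintro (⟨t, v⟩ | c | c)
      · exact ⟨Sum.inl (if f v then VPart.l else VPart.r, v),
          Finset.mem_image_of_mem _ (Finset.mem_univ v), rfl⟩
      · obtain ⟨v, hv, hfv⟩ := hp c
        refine ⟨Sum.inl (VPart.l, v), ?_, ⟨rfl, hv⟩⟩
        simpa [hfv] using Finset.mem_image_of_mem
          (fun v => (Sum.inl (if f v then VPart.l else VPart.r, v) : (VPart × ν) ⊕ P ⊕ N))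
          (Finset.mem_univ v)
      · obtain ⟨v, hv, hfv⟩ := hnn c
        refine ⟨Sum.inl (VPart.r, v), ?_, ⟨rfl, hv⟩⟩
        simpa [hfv] using Finset.mem_image_of_mem
          (fun v => (Sum.inl (if f v then VPart.l else VPart.r, v) : (VPart × ν) ⊕ P ⊕ N))
          (Finset.mem_univ v)
  · rintro ⟨S, hS, hcov⟩
    have key : ∀ v : ν, ∃ t, Sum.inl (t, v) ∈ S := by
      intro v
      obtain ⟨s, hsS, hst⟩ := hcov (Sum.inl (VPart.m, v))
      rcases s with ⟨t, v'⟩ | c | c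
      · obtain rfl : v' = v := hst
        exact ⟨t, hsS⟩
      · exact absurd hst.1 (by decide)
      · exact absurd hst.1 (by decide)
    choose t ht using key
    have hinj : Function.Injective (fun v => (Sum.inl (t v, v) : (VPart × ν) ⊕ P ⊕ N)) := by
      intro a b h
      simp only [Sum.inl.injEq, Prod.mk.injEq] at h
      exact h.2
    have hTS : Finset.univ.image (fun v => (Sum.inl (t v, v) : (VPart × ν) ⊕ P ⊕ N)) = S := by
      apply Finset.eq_of_subset_of_card_le
      · intro s hs
        obtain ⟨v, _, rfl⟩ := Finset.mem_image.mp hs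
        exact ht v
      · rw [Finset.card_image_of_injective _ hinj, Finset.card_univ, ← hn]
        exact hS
    have hform : ∀ s ∈ S, ∃ v, s = Sum.inl (t v, v) := by
      intro s hs
      obtain ⟨v, _, rfl⟩ := Finset.mem_image.mp (hTS ▸ hs)
      exact ⟨v, rfl⟩
    have huniq : ∀ (v : ν) (t' : VPart), Sum.inl (t', v) ∈ S → t' = t v := by
      intro v t' h
      obtain ⟨w, hw⟩ := hform _ h
      simp only [Sum.inl.injEq, Prod.mk.injEq] at hw
      obtain ⟨h1, rfl⟩ := hw
      exact h1
    refine ⟨fun v => decide (Sum.inl (VPart.l, v) ∈ S), ?_, ?_⟩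
    · intro c
      obtain ⟨s, hsS, hst⟩ := hcov (Sum.inr (Sum.inl c))
      obtain ⟨v, rfl⟩ := hform _ hsS
      obtain ⟨h1, h2⟩ := hst
      refine ⟨v, h2, ?_⟩
      simp [h1 ▸ ht v]
    · intro c
      obtain ⟨s, hsS, hst⟩ := hcov (Sum.inr (Sum.inr c))
      obtain ⟨v, rfl⟩ := hform _ hsS
      obtain ⟨h1, h2⟩ := hst
      refine ⟨v, h2, ?_⟩
      simp only [decide_eq_false_iff_not]
      intro hl
      have := huniq v VPart.l hl
      rw [h1] at this
      exact absurd this (by decide)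
end

section
/- Let (X, C⁺, C⁻) be a monotone 3SAT instance with |X| = n. Consider the set of stabbers S = {l, r} × X and the set of targets D = X ⊔ C⁺ ⊔ C⁻, with the relation: (l, v) stabs target v and (r, v) stabs target v for every v ∈ X; (l, v) stabs a clause c ∈ C⁺ iff v ∈ c; (r, v) stabs a clause c ∈ C⁻ iff v ∈ c; and no other pairs are related. Then the instance has a satisfying assignment if and only if there exists S' ⊆ S with |S'| ≤ n such that every target in D is stabbed by some element of S'. -/
/-- The two horizontal segments associated with a variable: left and right. -/
inductive LR : Type
  | l | r
  deriving DecidableEq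

/-- The abstract stabbing relation of the modified reduction: stabbers are
`{l,r} × X`, targets are `X ⊔ C⁺ ⊔ C⁻`; `(l,v)` and `(r,v)` stab target `v`
(the small vertical segment `s'(v)`); `(l,v)` stabs a positive clause `c` iff
`v ∈ c`; `(r,v)` stabs a negative clause `c` iff `v ∈ c`; no other pairs. -/
def StabsT {ν P N : Type*} (cp : P → Finset ν) (cn : N → Finset ν) :
    LR × ν → ν ⊕ P ⊕ N → Prop
  | (_, v), .inl v' => v = v'
  | (t, v), .inr (.inl c) => t = LR.l ∧ v ∈ cp c
  | (t, v), .inr (.inr c) => t = LR.r ∧ v ∈ cn c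

/-- Correctness of the reduction for Theorem 4: a monotone 3SAT instance is
satisfiable iff the abstract `(H, V)`-stabbing instance has a feasible
solution of size at most `n`, the number of variables. -/
theorem stmt8 {ν P N : Type*} [Fintype ν] [Fintype P] [Fintype N]
    (cp : P → Finset ν) (cn : N → Finset ν)
    (hcp : ∀ c, (cp c).Nonempty ∧ (cp c).card ≤ 3)
    (hcn : ∀ c, (cn c).Nonempty ∧ (cn c).card ≤ 3)
    (n : ℕ) (hn : n = Fintype.card ν) :
    (∃ f : ν → Bool,
        (∀ c : P, ∃ v ∈ cp c, f v = true) ∧ (∀ c : N, ∃ v ∈ cn c, f v = false)) ↔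
      (∃ S' : Finset (LR × ν), S'.card ≤ n ∧
        ∀ d : ν ⊕ P ⊕ N, ∃ s ∈ S', StabsT cp cn s d) := by
  classical
  constructor
  · rintro ⟨f, hP, hN⟩
    refine ⟨Finset.univ.image (fun v => ((if f v then LR.l else LR.r), v)), ?_, ?_⟩
    · calc (Finset.univ.image (fun v => ((if f v then LR.l else LR.r), v))).card
          ≤ Finset.univ.card := Finset.card_image_le
        _ = n := by rw [hn]; rfl
    · rintro (v | c | c)
      · exact ⟨_, Finset.mem_image_of_mem _ (Finset.mem_univ v), rfl⟩
      · obtain ⟨v, hv, hfv⟩ := hP c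
        refine ⟨_, Finset.mem_image_of_mem _ (Finset.mem_univ v), ?_⟩
        simp [StabsT, hfv, hv]
      · obtain ⟨v, hv, hfv⟩ := hN c
        refine ⟨_, Finset.mem_image_of_mem _ (Finset.mem_univ v), ?_⟩
        simp [StabsT, hfv, hv]
  · rintro ⟨S', hcard, hcov⟩
    -- every variable appears as second coordinate
    have hsurj : ∀ v : ν, ∃ t, (t, v) ∈ S' := by
      intro v
      obtain ⟨⟨t, w⟩, hs, hst⟩ := hcov (.inl v)
      cases hst; exact ⟨t, hs⟩
    have himg : S'.image Prod.snd = Finset.univ := by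
      apply Finset.eq_univ_of_forall
      intro v
      obtain ⟨t, ht⟩ := hsurj v
      exact Finset.mem_image.mpr ⟨(t, v), ht, rfl⟩
    have hle : Fintype.card ν ≤ S'.card := by
      calc Fintype.card ν = (S'.image Prod.snd).card := by rw [himg]; rfl
        _ ≤ S'.card := Finset.card_image_le
    have hScard : S'.card = Fintype.card ν := le_antisymm (hn ▸ hcard) hle
    have hinj : Set.InjOn Prod.snd (S' : Set (LR × ν)) := by
      rw [← Finset.card_image_iff]
      rw [himg, Finset.card_univ, hScard]
    refine ⟨fun v => decide ((LR.l, v) ∈ S'), ?_, ?_⟩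
    · intro c
      obtain ⟨⟨t, w⟩, hs, ht, hw⟩ := hcov (.inr (.inl c))
      subst ht
      exact ⟨w, hw, by simpa using hs⟩
    · intro c
      obtain ⟨⟨t, w⟩, hs, ht, hw⟩ := hcov (.inr (.inr c))
      subst ht
      refine ⟨w, hw, ?_⟩
      simp only [decide_eq_false_iff_not]
      intro hl
      have := hinj hl hs rfl
      simp at this
end

section
/- Let H be a finite nonempty set of horizontal segments each crossing the vertical line L_v: x = 0, and let V be a finite set of vertical segments. Let W be a finite set of vertical segments together with a bijection y ↦ w_y from the set of y-coordinates of segments of H to W such that for each such y, {h ∈ H : w_y ∩ h ≠ ∅} = {h ∈ H : h has y-coordinate y}. Then the minimum cardinality of a subset of H ∪ V that hits H equals the minimum cardinality of a subset of V ∪ W that hits H. -/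
open scoped Classical

/-- `s` is a vertical segment. -/
def IsVertical (s : Set (ℝ × ℝ)) : Prop :=
  ∃ x c d : ℝ, c ≤ d ∧ s = ({x} : Set ℝ) ×ˢ Set.Icc c d

/-- The remark of Section 4: `(H ⊔ V, H)`-stabbing is a special case of
`(V, H)`-stabbing. If for each `y`-coordinate `y` of `H` a vertical segment
`w y` is added whose intersections with `H` are exactly the segments of `H`
with `y`-coordinate `y` (with `y ↦ w y` injective on the `y`-coordinates and
`W` the set of these segments), then the minimum size of a subset of `H ∪ V`
hitting `H` equals the minimum size of a subset of `V ∪ W` hitting `H`. -/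
theorem stmt11 (H V W : Finset (Set (ℝ × ℝ)))
    (hHne : H.Nonempty)
    (yc : Set (ℝ × ℝ) → ℝ)
    (hH : ∀ h ∈ H, ∃ a b : ℝ, a ≤ 0 ∧ 0 ≤ b ∧
      h = Set.Icc a b ×ˢ ({yc h} : Set ℝ))
    (hV : ∀ v ∈ V, IsVertical v)
    (w : ℝ → Set (ℝ × ℝ))
    (hW : W = (H.image yc).image w)
    (hwvert : ∀ y ∈ H.image yc, IsVertical (w y))
    (hwinj : ∀ y ∈ H.image yc, ∀ y' ∈ H.image yc, w y = w y' → y = y')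
    (hwstab : ∀ y ∈ H.image yc, ∀ h ∈ H, ((w y ∩ h).Nonempty ↔ yc h = y)) :
    sInf {k | ∃ T ⊆ H ∪ V, Hits T H ∧ T.card = k} =
      sInf {k | ∃ T ⊆ V ∪ W, Hits T H ∧ T.card = k} := by
  classical
  -- every h ∈ H contains (0, yc h)
  have hmem : ∀ h ∈ H, ((0 : ℝ), yc h) ∈ h := by
    intro h hh
    obtain ⟨a, b, ha, hb, heq⟩ := hH h hh
    have : ((0 : ℝ), yc h) ∈ Set.Icc a b ×ˢ ({yc h} : Set ℝ) := ⟨⟨ha, hb⟩, rfl⟩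
    rwa [← heq] at this
  -- two members of H intersect iff same y-coordinate (one direction)
  have hsame : ∀ h ∈ H, ∀ h' ∈ H, (h ∩ h').Nonempty → yc h = yc h' := by
    intro h hh h' hh' ⟨⟨x, y⟩, hp, hp'⟩
    obtain ⟨a, b, _, _, heq⟩ := hH h hh
    obtain ⟨a', b', _, _, heq'⟩ := hH h' hh'
    rw [heq] at hp; rw [heq'] at hp'
    have h1 : y = yc h := hp.2
    have h2 : y = yc h' := hp'.2
    rw [← h1, ← h2]
  -- same y-coordinate implies intersection
  have hsame' : ∀ h ∈ H, ∀ h' ∈ H, yc h = yc h' → (h ∩ h').Nonempty := by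
    intro h hh h' hh' hy
    exact ⟨((0 : ℝ), yc h), hmem h hh, hy ▸ hmem h' hh'⟩
  -- general replacement principle
  have main : ∀ (A B : Finset (Set (ℝ × ℝ))),
      (∀ t ∈ A, ∃ t' ∈ B, ∀ h ∈ H, (t ∩ h).Nonempty → (t' ∩ h).Nonempty) →
      ∀ T ⊆ A, Hits T H → ∃ T' ⊆ B, Hits T' H ∧ T'.card ≤ T.card := by
    intro A B rep T hTA hTH
    set f : Set (ℝ × ℝ) → Set (ℝ × ℝ) :=
      fun t => if ht : t ∈ A then (rep t ht).choose else t with hf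
    refine ⟨T.image f, ?_, ?_, Finset.card_image_le⟩
    · intro t' ht'
      obtain ⟨t, htT, rfl⟩ := Finset.mem_image.mp ht'
      have htA : t ∈ A := hTA htT
      simp only [hf, dif_pos htA]
      exact (rep t htA).choose_spec.1
    · intro h hh
      obtain ⟨a, haT, hstab⟩ := hTH h hh
      have haA : a ∈ A := hTA haT
      refine ⟨f a, Finset.mem_image_of_mem f haT, ?_⟩
      simp only [hf, dif_pos haA]
      exact (rep a haA).choose_spec.2 h hh hstab
  -- replacement H ∪ V → V ∪ W
  have rep1 : ∀ t ∈ H ∪ V, ∃ t' ∈ V ∪ W, ∀ h ∈ H,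
      (t ∩ h).Nonempty → (t' ∩ h).Nonempty := by
    intro t ht
    by_cases htH : t ∈ H
    · have hyc : yc t ∈ H.image yc := Finset.mem_image_of_mem yc htH
      refine ⟨w (yc t), Finset.mem_union_right _ ?_, ?_⟩
      · rw [hW]; exact Finset.mem_image_of_mem w hyc
      · intro h hh hst
        exact (hwstab (yc t) hyc h hh).mpr (hsame t htH h hh hst).symm
    · refine ⟨t, Finset.mem_union_left _ ?_, fun h hh hst => hst⟩
      rcases Finset.mem_union.mp ht with h1 | h1
      · exact absurd h1 htH
      · exact h1
  -- replacement V ∪ W → H ∪ V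
  have rep2 : ∀ t ∈ V ∪ W, ∃ t' ∈ H ∪ V, ∀ h ∈ H,
      (t ∩ h).Nonempty → (t' ∩ h).Nonempty := by
    intro t ht
    by_cases htW : t ∈ W
    · rw [hW] at htW
      obtain ⟨y, hy, rfl⟩ := Finset.mem_image.mp htW
      obtain ⟨h₀, hh₀, hyh₀⟩ := Finset.mem_image.mp hy
      refine ⟨h₀, Finset.mem_union_left _ hh₀, ?_⟩
      intro h hh hst
      have : yc h = y := (hwstab y hy h hh).mp hst
      exact hsame' h₀ hh₀ h hh (by rw [hyh₀, this])
    · refine ⟨t, Finset.mem_union_right _ ?_, fun h hh hst => hst⟩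
      rcases Finset.mem_union.mp ht with h1 | h1
      · exact h1
      · exact absurd h1 htW
  -- both sets of cardinalities
  set S1 := {k | ∃ T ⊆ H ∪ V, Hits T H ∧ T.card = k} with hS1
  set S2 := {k | ∃ T ⊆ V ∪ W, Hits T H ∧ T.card = k} with hS2
  have hS1ne : S1.Nonempty := by
    refine ⟨H.card, H, Finset.subset_union_left, ?_, rfl⟩
    intro h hh
    exact ⟨h, hh, ⟨((0 : ℝ), yc h), hmem h hh, hmem h hh⟩⟩
  have step : ∀ k ∈ S1, ∃ k' ∈ S2, k' ≤ k := by
    rintro k ⟨T, hT, hHits, rfl⟩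
    obtain ⟨T', hT', hHits', hcard⟩ := main (H ∪ V) (V ∪ W) rep1 T hT hHits
    exact ⟨T'.card, ⟨T', hT', hHits', rfl⟩, hcard⟩
  have step' : ∀ k ∈ S2, ∃ k' ∈ S1, k' ≤ k := by
    rintro k ⟨T, hT, hHits, rfl⟩
    obtain ⟨T', hT', hHits', hcard⟩ := main (V ∪ W) (H ∪ V) rep2 T hT hHits
    exact ⟨T'.card, ⟨T', hT', hHits', rfl⟩, hcard⟩
  obtain ⟨k2, hk2, hk2le⟩ := step _ (Nat.sInf_mem hS1ne)
  have hS2ne : S2.Nonempty := ⟨k2, hk2⟩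
  obtain ⟨k1, hk1, hk1le⟩ := step' _ (Nat.sInf_mem hS2ne)
  exact le_antisymm (le_trans (Nat.sInf_le hk1) hk1le)
    (le_trans (Nat.sInf_le hk2) hk2le)
end
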